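/- Let (Q0, Q1, Q2, Q3, A1, A2) be a solution of system (S) on [0, T) with initial data satisfying Q_i(0) ≥ 0 for i = 0,1,2,3, A1(0) ∈ [-τ_{A1}, τ_{A1}] and A2(0) ∈ [0, τ_{A2}]. Then Q2 and Q3 are bounded on [0, T): there exist constants C2(T) > 0 and C3(T) > 0 such that Q2(t) ≤ C2(T) and Q3(t) ≤ C3(T) for all t ∈ [0, T). -/

import Mathlib

open Set Real Filter
open scoped Topology

lemma myGron {f f' : ℝ → ℝ} {δ K ε a b : ℝ}
    (hd : ∀ x ∈ Icc a b, HasDerivAt f (f' x) x)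
    (ha : f a ≤ δ) (bound : ∀ x ∈ Ico a b, f' x ≤ K * f x + ε) :
    ∀ x ∈ Icc a b, f x ≤ gronwallBound δ K ε (x - a) := by
  refine le_gronwallBound_of_liminf_deriv_right_le
    (fun x hx => (hd x hx).continuousAt.continuousWithinAt) ?_ ha bound
  intro x hx r hr
  have h := ((hd x (Ico_subset_Icc_self hx)).hasDerivWithinAt.liminf_right_slope_le hr)
  exact h.mono fun z hz => by
    simpa [slope_def_field, div_eq_inv_mul] using hz

lemma stay_nonpos {f f' : ℝ → ℝ} {a b K : ℝ}
    (hd : ∀ x ∈ Icc a b, HasDerivAt f (f' x) x)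
    (h0 : f a ≤ 0)
    (hb : ∀ x ∈ Icc a b, 0 ≤ f x → f' x ≤ K * f x) :
    ∀ x ∈ Icc a b, f x ≤ 0 := by
  by_contra hcon
  push_neg at hcon
  obtain ⟨t1, ht1, ht1pos⟩ := hcon
  have hab : a ≤ b := ht1.1.trans ht1.2
  obtain ⟨Sset, hSdef⟩ : ∃ S : Set ℝ, S = {t | t ∈ Icc a t1 ∧ f t ≤ 0} := ⟨_, rfl⟩
  have hane : a ∈ Sset := hSdef ▸ ⟨⟨le_refl a, ht1.1⟩, h0⟩
  have hSne : Sset.Nonempty := ⟨a, hane⟩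
  have hSbdd : BddAbove Sset := ⟨t1, fun x hx => by rw [hSdef] at hx; exact hx.1.2⟩
  obtain ⟨s, hs⟩ : ∃ s : ℝ, s = sSup Sset := ⟨_, rfl⟩
  have hsmem : s ∈ closure Sset := hs ▸ csSup_mem_closure hSne hSbdd
  have hsIcc : s ∈ Icc a t1 := isClosed_Icc.closure_subset
    ((closure_mono (fun x hx => by rw [hSdef] at hx; exact hx.1)) hsmem)
  have hsb : s ∈ Icc a b := ⟨hsIcc.1, hsIcc.2.trans ht1.2⟩
  have hfs : f s ≤ 0 := by
    have hne : (𝓝[Sset] s).NeBot := mem_closure_iff_nhdsWithin_neBot.mp hsmem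
    refine le_of_tendsto (f := f) (b := (0:ℝ))
      ((hd s hsb).continuousAt.continuousWithinAt : Filter.Tendsto f (𝓝[Sset] s) (𝓝 (f s))) ?_
    refine eventually_mem_nhdsWithin.mono fun z hz => ?_
    rw [hSdef] at hz; exact hz.2
  have hslt : s < t1 := lt_of_le_of_ne hsIcc.2 (by rintro rfl; linarith)
  have hpos : ∀ t ∈ Ioc s t1, 0 < f t := by
    intro t ht
    by_contra hft
    push_neg at hft
    have htm : t ∈ Sset := hSdef ▸ ⟨⟨hsIcc.1.trans ht.1.le, ht.2⟩, hft⟩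
    have := le_csSup hSbdd htm
    rw [← hs] at this
    exact absurd this (not_le.mpr ht.1)
  have hfs0 : f s = 0 := by
    refine le_antisymm hfs ?_
    refine ge_of_tendsto (f := f) (b := (0:ℝ))
      ((hd s hsb).continuousAt.continuousWithinAt : Filter.Tendsto f (𝓝[>] s) (𝓝 (f s))) ?_
    filter_upwards [Ioc_mem_nhdsGT_of_mem ⟨le_refl s, hslt⟩] with z hz
    exact (hpos z hz).le
  have hgron := myGron (f' := f') (δ := 0) (K := K) (ε := 0)
    (fun x hx => hd x ⟨hsb.1.trans hx.1, hx.2.trans ht1.2⟩)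
    (le_of_eq hfs0)
    (fun x hx => by
      have hxb : x ∈ Icc a b := ⟨hsb.1.trans hx.1, hx.2.le.trans ht1.2⟩
      have hfx : 0 ≤ f x := by
        rcases eq_or_lt_of_le hx.1 with h | h
        · rw [← h]; exact hfs0.ge
        · exact (hpos x ⟨h, hx.2.le⟩).le
      have := hb x hxb hfx
      linarith)
    t1 ⟨hslt.le, le_refl t1⟩
  rw [gronwallBound_ε0_δ0] at hgron
  linarith

set_option maxHeartbeats 2000000 in
theorem stmt6
    (T : ℝ) (hT : 0 < T)
    (γ2 γ3 τC τA1 τA1C τA2 τA2C α1 α2 α3 αb2 αb3 : ℝ)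
    (hγ2 : 0 < γ2) (hγ3 : 0 < γ3) (hτC : 0 < τC) (hτA1 : 0 < τA1)
    (hτA1C : 0 < τA1C) (hτA2 : 0 < τA2) (hτA2C : 0 < τA2C)
    (hα1 : 0 < α1) (hα2 : 0 < α2) (hα3 : 0 < α3) (hαb2 : 0 < αb2) (hαb3 : 0 < αb3)
    (f0 : ℝ → ℝ → ℝ) (f1 : ℝ → ℝ) (f2 : ℝ → ℝ → ℝ)
    (K0 K1 K2 : NNReal)
    (hf0lip : LipschitzWith K0 (fun p : ℝ × ℝ => f0 p.1 p.2))
    (hf1lip : LipschitzWith K1 f1)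
    (hf2lip : LipschitzWith K2 (fun p : ℝ × ℝ => f2 p.1 p.2))
    (m0 M0 m1 M1 m2 M2 : ℝ) (hm0 : 0 < m0) (hm1 : 0 < m1) (hm2 : 0 < m2)
    (hf0bd : ∀ x y, m0 ≤ f0 x y ∧ f0 x y ≤ M0)
    (hf1bd : ∀ x, m1 ≤ f1 x ∧ f1 x ≤ M1)
    (hf2bd : ∀ x y, m2 ≤ f2 x y ∧ f2 x y ≤ M2)
    (Q0 Q1 Q2 Q3 A1 A2 : ℝ → ℝ)
    (hQ0' : ∀ t ∈ Set.Ico 0 T, HasDerivAt Q0 (-(f0 (Q2 t) (Q3 t)) * Q0 t) t)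
    (hQ1' : ∀ t ∈ Set.Ico 0 T, HasDerivAt Q1 (f0 (Q2 t) (Q3 t) * Q0 t - f1 (A1 t) * Q1 t) t)
    (hQ2' : ∀ t ∈ Set.Ico 0 T, HasDerivAt Q2
      (γ2 * Q2 t * (1 - (Q2 t + Q3 t) / τC + A1 t / τA1C + A2 t / τA2C)
        + f1 (A1 t) * Q1 t - f2 (A1 t) (A2 t) * Q2 t) t)
    (hQ3' : ∀ t ∈ Set.Ico 0 T, HasDerivAt Q3
      (γ3 * Q3 t * (1 - (Q2 t + Q3 t) / τC + A1 t / τA1C + A2 t / τA2C)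
        + f2 (A1 t) (A2 t) * Q2 t) t)
    (hA1' : ∀ t ∈ Set.Ico 0 T, HasDerivAt A1
      ((α1 * Q1 t + α2 * Q2 t - α3 * Q3 t) * (1 + A1 t / τA1) * (1 - A1 t / τA1)) t)
    (hA2' : ∀ t ∈ Set.Ico 0 T, HasDerivAt A2
      ((αb2 * Q2 t + αb3 * Q3 t) * A2 t * (1 - A2 t / τA2)) t)
    (hQ0i : 0 ≤ Q0 0) (hQ1i : 0 ≤ Q1 0) (hQ2i : 0 ≤ Q2 0) (hQ3i : 0 ≤ Q3 0)
    (hA1i : A1 0 ∈ Set.Icc (-τA1) τA1) (hA2i : A2 0 ∈ Set.Icc 0 τA2) :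
    ∃ C2 C3 : ℝ, 0 < C2 ∧ 0 < C3 ∧
      ∀ t ∈ Set.Ico 0 T, Q2 t ≤ C2 ∧ Q3 t ≤ C3 := by
  have hsub : ∀ {t : ℝ}, t ∈ Set.Ico 0 T → ∀ {u : ℝ}, u ∈ Icc 0 t → u ∈ Set.Ico 0 T :=
    fun {t} ht {u} hu => ⟨hu.1, lt_of_le_of_lt hu.2 ht.2⟩
  -- Step 1 : Q0 ≥ 0
  have hQ0nn : ∀ t ∈ Set.Ico 0 T, 0 ≤ Q0 t := by
    intro t ht
    have h : -Q0 t ≤ 0 := stay_nonpos (f := fun u => -Q0 u)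
      (f' := fun u => f0 (Q2 u) (Q3 u) * Q0 u) (K := 0)
      (fun u hu => by
        have := (hQ0' u (hsub ht hu)).neg
        exact this.congr_deriv (by ring))
      (by simpa using hQ0i)
      (fun u hu hfu => by
        have h0 := (hf0bd (Q2 u) (Q3 u)).1
        have hfu' : Q0 u ≤ 0 := by simpa using hfu
        show f0 (Q2 u) (Q3 u) * Q0 u ≤ 0 * (-Q0 u)
        nlinarith)
      t ⟨ht.1, le_refl t⟩
    linarith
  -- Step 2 : Q0 ≤ Q0 0
  have hQ0le : ∀ t ∈ Set.Ico 0 T, Q0 t ≤ Q0 0 := by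
    intro t ht
    have h : Q0 t - Q0 0 ≤ 0 := stay_nonpos (f := fun u => Q0 u - Q0 0)
      (f' := fun u => -(f0 (Q2 u) (Q3 u)) * Q0 u) (K := 0)
      (fun u hu => (hQ0' u (hsub ht hu)).sub_const _)
      (by simp)
      (fun u hu hfu => by
        have h0 := (hf0bd (Q2 u) (Q3 u)).1
        have hfu' : Q0 0 ≤ Q0 u := by simpa [sub_nonneg] using hfu
        show -(f0 (Q2 u) (Q3 u)) * Q0 u ≤ 0 * (Q0 u - Q0 0)
        nlinarith)
      t ⟨ht.1, le_refl t⟩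
    linarith
  -- Step 3 : Q1 ≥ 0
  have hQ1nn : ∀ t ∈ Set.Ico 0 T, 0 ≤ Q1 t := by
    intro t ht
    have h : -Q1 t ≤ 0 := stay_nonpos (f := fun u => -Q1 u)
      (f' := fun u => f1 (A1 u) * Q1 u - f0 (Q2 u) (Q3 u) * Q0 u) (K := 0)
      (fun u hu => by
        have := (hQ1' u (hsub ht hu)).neg
        exact this.congr_deriv (by ring))
      (by simpa using hQ1i)
      (fun u hu hfu => by
        have h0 := (hf0bd (Q2 u) (Q3 u)).1
        have h1 := (hf1bd (A1 u)).1
        have hq0 := hQ0nn u (hsub ht hu)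
        have hfu' : Q1 u ≤ 0 := by simpa using hfu
        show f1 (A1 u) * Q1 u - f0 (Q2 u) (Q3 u) * Q0 u ≤ 0 * (-Q1 u)
        nlinarith)
      t ⟨ht.1, le_refl t⟩
    linarith
  -- Step 4 : Q1 ≤ B1
  have hQ1le : ∀ t ∈ Set.Ico 0 T, Q1 t ≤ Q1 0 + M0 * Q0 0 * T := by
    intro t ht
    have h := myGron (f := Q1)
      (f' := fun u => f0 (Q2 u) (Q3 u) * Q0 u - f1 (A1 u) * Q1 u)
      (δ := Q1 0) (K := 0) (ε := M0 * Q0 0)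
      (fun u hu => hQ1' u (hsub ht hu))
      le_rfl
      (fun u hu => by
        have hu' : u ∈ Set.Ico 0 T := hsub ht (Ico_subset_Icc_self hu)
        have h0 := (hf0bd (Q2 u) (Q3 u)).2
        have h1 := (hf1bd (A1 u)).1
        have hq0 := hQ0nn u hu'
        have hq0l := hQ0le u hu'
        have hq1 := hQ1nn u hu'
        have h00 := (hf0bd (Q2 u) (Q3 u)).1
        have hM0 : 0 ≤ M0 := hm0.le.trans (h00.trans h0)
        have e1 : f0 (Q2 u) (Q3 u) * Q0 u ≤ M0 * Q0 u := mul_le_mul_of_nonneg_right h0 hq0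
        have e2 : M0 * Q0 u ≤ M0 * Q0 0 := mul_le_mul_of_nonneg_left hq0l hM0
        have e3 : 0 ≤ f1 (A1 u) * Q1 u := mul_nonneg (hm1.le.trans h1) hq1
        show f0 (Q2 u) (Q3 u) * Q0 u - f1 (A1 u) * Q1 u ≤ 0 * Q1 u + M0 * Q0 0
        linarith)
      t ⟨ht.1, le_refl t⟩
    rw [gronwallBound_K0] at h
    have hM0 : 0 ≤ M0 := hm0.le.trans ((hf0bd 0 0).1.trans (hf0bd 0 0).2)
    have h' : Q1 t ≤ Q1 0 + M0 * Q0 0 * (t - 0) := h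
    have := mul_le_mul_of_nonneg_left ht.2.le (mul_nonneg hM0 hQ0i)
    nlinarith
  -- Step 5 : Q2 ≥ 0
  have hQ2nn : ∀ t ∈ Set.Ico 0 T, 0 ≤ Q2 t := by
    intro t ht
    have cQ2 : ContinuousOn Q2 (Icc 0 t) :=
      fun u hu => (hQ2' u (hsub ht hu)).continuousAt.continuousWithinAt
    have cQ3 : ContinuousOn Q3 (Icc 0 t) :=
      fun u hu => (hQ3' u (hsub ht hu)).continuousAt.continuousWithinAt
    have cA1 : ContinuousOn A1 (Icc 0 t) :=
      fun u hu => (hA1' u (hsub ht hu)).continuousAt.continuousWithinAt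
    have cA2 : ContinuousOn A2 (Icc 0 t) :=
      fun u hu => (hA2' u (hsub ht hu)).continuousAt.continuousWithinAt
    have cE : ContinuousOn (fun u => γ2 * (1 - (Q2 u + Q3 u) / τC + A1 u / τA1C + A2 u / τA2C))
        (Icc 0 t) :=
      continuousOn_const.mul (((continuousOn_const.sub ((cQ2.add cQ3).div_const τC)).add
        (cA1.div_const τA1C)).add (cA2.div_const τA2C))
    obtain ⟨K, hKb⟩ := isCompact_Icc.exists_bound_of_continuousOn cE
    have h : -Q2 t ≤ 0 := stay_nonpos (f := fun u => -Q2 u)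
      (f' := fun u => f2 (A1 u) (A2 u) * Q2 u - f1 (A1 u) * Q1 u
        - γ2 * Q2 u * (1 - (Q2 u + Q3 u) / τC + A1 u / τA1C + A2 u / τA2C))
      (K := max K 0)
      (fun u hu => by
        have := (hQ2' u (hsub ht hu)).neg
        exact this.congr_deriv (by ring))
      (by simpa using hQ2i)
      (fun u hu hfu => by
        have hu' : u ∈ Set.Ico 0 T := hsub ht hu
        have h2 := (hf2bd (A1 u) (A2 u)).1
        have h1 := (hf1bd (A1 u)).1
        have hq1 := hQ1nn u hu'
        have hfu' : 0 ≤ -Q2 u := by simpa using hfu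
        have hKu := hKb u hu
        rw [Real.norm_eq_abs] at hKu
        have hEle : γ2 * (1 - (Q2 u + Q3 u) / τC + A1 u / τA1C + A2 u / τA2C) ≤ max K 0 :=
          (le_abs_self _).trans (hKu.trans (le_max_left _ _))
        have key := mul_le_mul_of_nonneg_left hEle hfu'
        have hf2q : 0 ≤ f2 (A1 u) (A2 u) * (-Q2 u) :=
          mul_nonneg (hm2.le.trans h2) hfu'
        have hf1q : 0 ≤ f1 (A1 u) * Q1 u := mul_nonneg (hm1.le.trans h1) hq1
        show f2 (A1 u) (A2 u) * Q2 u - f1 (A1 u) * Q1 u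
          - γ2 * Q2 u * (1 - (Q2 u + Q3 u) / τC + A1 u / τA1C + A2 u / τA2C)
          ≤ max K 0 * (-Q2 u)
        nlinarith [key, hf2q, hf1q])
      t ⟨ht.1, le_refl t⟩
    linarith
  -- Step 6 : Q3 ≥ 0
  have hQ3nn : ∀ t ∈ Set.Ico 0 T, 0 ≤ Q3 t := by
    intro t ht
    have cQ2 : ContinuousOn Q2 (Icc 0 t) :=
      fun u hu => (hQ2' u (hsub ht hu)).continuousAt.continuousWithinAt
    have cQ3 : ContinuousOn Q3 (Icc 0 t) :=
      fun u hu => (hQ3' u (hsub ht hu)).continuousAt.continuousWithinAt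
    have cA1 : ContinuousOn A1 (Icc 0 t) :=
      fun u hu => (hA1' u (hsub ht hu)).continuousAt.continuousWithinAt
    have cA2 : ContinuousOn A2 (Icc 0 t) :=
      fun u hu => (hA2' u (hsub ht hu)).continuousAt.continuousWithinAt
    have cE : ContinuousOn (fun u => γ3 * (1 - (Q2 u + Q3 u) / τC + A1 u / τA1C + A2 u / τA2C))
        (Icc 0 t) :=
      continuousOn_const.mul (((continuousOn_const.sub ((cQ2.add cQ3).div_const τC)).add
        (cA1.div_const τA1C)).add (cA2.div_const τA2C))
    obtain ⟨K, hKb⟩ := isCompact_Icc.exists_bound_of_continuousOn cE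
    have h : -Q3 t ≤ 0 := stay_nonpos (f := fun u => -Q3 u)
      (f' := fun u => -(f2 (A1 u) (A2 u) * Q2 u)
        - γ3 * Q3 u * (1 - (Q2 u + Q3 u) / τC + A1 u / τA1C + A2 u / τA2C))
      (K := max K 0)
      (fun u hu => by
        have := (hQ3' u (hsub ht hu)).neg
        exact this.congr_deriv (by ring))
      (by simpa using hQ3i)
      (fun u hu hfu => by
        have hu' : u ∈ Set.Ico 0 T := hsub ht hu
        have h2 := (hf2bd (A1 u) (A2 u)).1
        have hq2 := hQ2nn u hu'
        have hfu' : 0 ≤ -Q3 u := by simpa using hfu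
        have hKu := hKb u hu
        rw [Real.norm_eq_abs] at hKu
        have hEle : γ3 * (1 - (Q2 u + Q3 u) / τC + A1 u / τA1C + A2 u / τA2C) ≤ max K 0 :=
          (le_abs_self _).trans (hKu.trans (le_max_left _ _))
        have key := mul_le_mul_of_nonneg_left hEle hfu'
        have hf2q : 0 ≤ f2 (A1 u) (A2 u) * Q2 u := mul_nonneg (hm2.le.trans h2) hq2
        show -(f2 (A1 u) (A2 u) * Q2 u)
          - γ3 * Q3 u * (1 - (Q2 u + Q3 u) / τC + A1 u / τA1C + A2 u / τA2C)
          ≤ max K 0 * (-Q3 u)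
        nlinarith [key, hf2q])
      t ⟨ht.1, le_refl t⟩
    linarith
  -- Step 7 : A1 ≤ τA1
  have hA1ub : ∀ t ∈ Set.Ico 0 T, A1 t ≤ τA1 := by
    intro t ht
    have cQ1 : ContinuousOn Q1 (Icc 0 t) :=
      fun u hu => (hQ1' u (hsub ht hu)).continuousAt.continuousWithinAt
    have cQ2 : ContinuousOn Q2 (Icc 0 t) :=
      fun u hu => (hQ2' u (hsub ht hu)).continuousAt.continuousWithinAt
    have cQ3 : ContinuousOn Q3 (Icc 0 t) :=
      fun u hu => (hQ3' u (hsub ht hu)).continuousAt.continuousWithinAt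
    have cA1 : ContinuousOn A1 (Icc 0 t) :=
      fun u hu => (hA1' u (hsub ht hu)).continuousAt.continuousWithinAt
    have cc : ContinuousOn (fun u =>
        (α1 * Q1 u + α2 * Q2 u - α3 * Q3 u) * (1 + A1 u / τA1) / τA1) (Icc 0 t) :=
      ((((continuousOn_const.mul cQ1).add (continuousOn_const.mul cQ2)).sub
        (continuousOn_const.mul cQ3)).mul
        (continuousOn_const.add (cA1.div_const τA1))).div_const τA1
    obtain ⟨K, hKb⟩ := isCompact_Icc.exists_bound_of_continuousOn cc
    have h : A1 t - τA1 ≤ 0 := stay_nonpos (f := fun u => A1 u - τA1)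
      (f' := fun u =>
        (α1 * Q1 u + α2 * Q2 u - α3 * Q3 u) * (1 + A1 u / τA1) * (1 - A1 u / τA1))
      (K := max K 0)
      (fun u hu => (hA1' u (hsub ht hu)).sub_const _)
      (by simpa using hA1i.2)
      (fun u hu hfu => by
        have hfu' : 0 ≤ A1 u - τA1 := hfu
        have hKu := hKb u hu
        rw [Real.norm_eq_abs] at hKu
        have hcle : -((α1 * Q1 u + α2 * Q2 u - α3 * Q3 u) * (1 + A1 u / τA1) / τA1)
            ≤ max K 0 := (neg_le_abs _).trans (hKu.trans (le_max_left _ _))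
        have heq : (α1 * Q1 u + α2 * Q2 u - α3 * Q3 u) * (1 + A1 u / τA1) * (1 - A1 u / τA1)
            = -((α1 * Q1 u + α2 * Q2 u - α3 * Q3 u) * (1 + A1 u / τA1) / τA1)
              * (A1 u - τA1) := by
          field_simp
          ring
        show (α1 * Q1 u + α2 * Q2 u - α3 * Q3 u) * (1 + A1 u / τA1) * (1 - A1 u / τA1)
          ≤ max K 0 * (A1 u - τA1)
        rw [heq]
        exact mul_le_mul_of_nonneg_right hcle hfu')
      t ⟨ht.1, le_refl t⟩
    linarith
  -- Step 8 : A2 ≤ τA2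
  have hA2ub : ∀ t ∈ Set.Ico 0 T, A2 t ≤ τA2 := by
    intro t ht
    have cQ2 : ContinuousOn Q2 (Icc 0 t) :=
      fun u hu => (hQ2' u (hsub ht hu)).continuousAt.continuousWithinAt
    have cQ3 : ContinuousOn Q3 (Icc 0 t) :=
      fun u hu => (hQ3' u (hsub ht hu)).continuousAt.continuousWithinAt
    have cA2 : ContinuousOn A2 (Icc 0 t) :=
      fun u hu => (hA2' u (hsub ht hu)).continuousAt.continuousWithinAt
    have cc : ContinuousOn (fun u =>
        -((αb2 * Q2 u + αb3 * Q3 u) * A2 u / τA2)) (Icc 0 t) :=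
      ((((continuousOn_const.mul cQ2).add (continuousOn_const.mul cQ3)).mul
        cA2).div_const τA2).neg
    obtain ⟨K, hKb⟩ := isCompact_Icc.exists_bound_of_continuousOn cc
    have h : A2 t - τA2 ≤ 0 := stay_nonpos (f := fun u => A2 u - τA2)
      (f' := fun u => (αb2 * Q2 u + αb3 * Q3 u) * A2 u * (1 - A2 u / τA2))
      (K := max K 0)
      (fun u hu => (hA2' u (hsub ht hu)).sub_const _)
      (by simpa using hA2i.2)
      (fun u hu hfu => by
        have hfu' : 0 ≤ A2 u - τA2 := hfu
        have hKu := hKb u hu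
        rw [Real.norm_eq_abs] at hKu
        have hcle : -((αb2 * Q2 u + αb3 * Q3 u) * A2 u / τA2) ≤ max K 0 :=
          (le_abs_self _).trans (hKu.trans (le_max_left _ _))
        have heq : (αb2 * Q2 u + αb3 * Q3 u) * A2 u * (1 - A2 u / τA2)
            = -((αb2 * Q2 u + αb3 * Q3 u) * A2 u / τA2) * (A2 u - τA2) := by
          field_simp
          ring
        show (αb2 * Q2 u + αb3 * Q3 u) * A2 u * (1 - A2 u / τA2)
          ≤ max K 0 * (A2 u - τA2)
        rw [heq]
        exact mul_le_mul_of_nonneg_right hcle hfu')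
      t ⟨ht.1, le_refl t⟩
    linarith
  -- Step 9 : A2 ≥ 0
  have hA2nn : ∀ t ∈ Set.Ico 0 T, 0 ≤ A2 t := by
    intro t ht
    have cQ2 : ContinuousOn Q2 (Icc 0 t) :=
      fun u hu => (hQ2' u (hsub ht hu)).continuousAt.continuousWithinAt
    have cQ3 : ContinuousOn Q3 (Icc 0 t) :=
      fun u hu => (hQ3' u (hsub ht hu)).continuousAt.continuousWithinAt
    have cA2 : ContinuousOn A2 (Icc 0 t) :=
      fun u hu => (hA2' u (hsub ht hu)).continuousAt.continuousWithinAt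
    have cc : ContinuousOn (fun u =>
        (αb2 * Q2 u + αb3 * Q3 u) * (1 - A2 u / τA2)) (Icc 0 t) :=
      (((continuousOn_const.mul cQ2).add (continuousOn_const.mul cQ3)).mul
        (continuousOn_const.sub (cA2.div_const τA2)))
    obtain ⟨K, hKb⟩ := isCompact_Icc.exists_bound_of_continuousOn cc
    have h : -A2 t ≤ 0 := stay_nonpos (f := fun u => -A2 u)
      (f' := fun u => -((αb2 * Q2 u + αb3 * Q3 u) * A2 u * (1 - A2 u / τA2)))
      (K := max K 0)
      (fun u hu => (hA2' u (hsub ht hu)).neg)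
      (by simpa using hA2i.1)
      (fun u hu hfu => by
        have hfu' : 0 ≤ -A2 u := hfu
        have hKu := hKb u hu
        rw [Real.norm_eq_abs] at hKu
        have hcle : (αb2 * Q2 u + αb3 * Q3 u) * (1 - A2 u / τA2) ≤ max K 0 :=
          (le_abs_self _).trans (hKu.trans (le_max_left _ _))
        have heq : -((αb2 * Q2 u + αb3 * Q3 u) * A2 u * (1 - A2 u / τA2))
            = (αb2 * Q2 u + αb3 * Q3 u) * (1 - A2 u / τA2) * (-A2 u) := by ring
        show -((αb2 * Q2 u + αb3 * Q3 u) * A2 u * (1 - A2 u / τA2)) ≤ max K 0 * (-A2 u)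
        rw [heq]
        exact mul_le_mul_of_nonneg_right hcle hfu')
      t ⟨ht.1, le_refl t⟩
    linarith
  -- Step 10 : final Gronwall bound for Q2 + Q3
  obtain ⟨c, hcdef⟩ : ∃ c : ℝ, c = 1 + τA1 / τA1C + τA2 / τA2C := ⟨_, rfl⟩
  have hc : (0:ℝ) < c := by rw [hcdef]; positivity
  obtain ⟨Kf, hKdef⟩ : ∃ k : ℝ, k = max γ2 γ3 * c := ⟨_, rfl⟩
  have hKpos : (0:ℝ) < Kf := by
    rw [hKdef]; exact mul_pos (lt_max_iff.mpr (Or.inl hγ2)) hc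
  obtain ⟨B1, hB1def⟩ : ∃ b : ℝ, b = Q1 0 + M0 * Q0 0 * T := ⟨_, rfl⟩
  have hM0 : 0 ≤ M0 := hm0.le.trans ((hf0bd 0 0).1.trans (hf0bd 0 0).2)
  have hM1 : 0 ≤ M1 := hm1.le.trans ((hf1bd 0).1.trans (hf1bd 0).2)
  have hB1nn : 0 ≤ B1 := by
    have h1 : 0 ≤ M0 * Q0 0 * T := mul_nonneg (mul_nonneg hM0 hQ0i) hT.le
    rw [hB1def]; linarith
  obtain ⟨εf, hεdef⟩ : ∃ e : ℝ, e = M1 * B1 := ⟨_, rfl⟩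
  have hεnn : 0 ≤ εf := by rw [hεdef]; exact mul_nonneg hM1 hB1nn
  have hSb : ∀ t ∈ Set.Ico 0 T, Q2 t + Q3 t ≤ gronwallBound (Q2 0 + Q3 0) Kf εf (t - 0) := by
    intro t ht
    refine myGron (f := fun u => Q2 u + Q3 u)
      (f' := fun u => γ2 * Q2 u * (1 - (Q2 u + Q3 u) / τC + A1 u / τA1C + A2 u / τA2C)
        + γ3 * Q3 u * (1 - (Q2 u + Q3 u) / τC + A1 u / τA1C + A2 u / τA2C)
        + f1 (A1 u) * Q1 u)
      (fun u hu => by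
        have := (hQ2' u (hsub ht hu)).add (hQ3' u (hsub ht hu))
        exact this.congr_deriv (by ring))
      le_rfl
      (fun u hu => by
        have hu' : u ∈ Set.Ico 0 T := hsub ht (Ico_subset_Icc_self hu)
        have hq2 := hQ2nn u hu'
        have hq3 := hQ3nn u hu'
        have ha1 := hA1ub u hu'
        have ha2 := hA2ub u hu'
        have hq1 := hQ1nn u hu'
        have hq1b : Q1 u ≤ B1 := by rw [hB1def]; exact hQ1le u hu'
        have hE : 1 - (Q2 u + Q3 u) / τC + A1 u / τA1C + A2 u / τA2C ≤ c := by
          have d1 : 0 ≤ (Q2 u + Q3 u) / τC := div_nonneg (by linarith) hτC.le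
          have d2 : A1 u / τA1C ≤ τA1 / τA1C := div_le_div_of_nonneg_right ha1 hτA1C.le
          have d3 : A2 u / τA2C ≤ τA2 / τA2C := div_le_div_of_nonneg_right ha2 hτA2C.le
          rw [hcdef]; linarith
        have key2 : γ2 * Q2 u * (1 - (Q2 u + Q3 u) / τC + A1 u / τA1C + A2 u / τA2C)
            ≤ γ2 * Q2 u * c :=
          mul_le_mul_of_nonneg_left hE (mul_nonneg hγ2.le hq2)
        have key3 : γ3 * Q3 u * (1 - (Q2 u + Q3 u) / τC + A1 u / τA1C + A2 u / τA2C)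
            ≤ γ3 * Q3 u * c :=
          mul_le_mul_of_nonneg_left hE (mul_nonneg hγ3.le hq3)
        have key1 : f1 (A1 u) * Q1 u ≤ M1 * B1 :=
          mul_le_mul (hf1bd (A1 u)).2 hq1b hq1 hM1
        have hg2 : γ2 * Q2 u * c ≤ max γ2 γ3 * c * Q2 u := by
          have h1 : 0 ≤ Q2 u * c := mul_nonneg hq2 hc.le
          nlinarith [le_max_left γ2 γ3]
        have hg3 : γ3 * Q3 u * c ≤ max γ2 γ3 * c * Q3 u := by
          have h1 : 0 ≤ Q3 u * c := mul_nonneg hq3 hc.le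
          nlinarith [le_max_right γ2 γ3]
        show γ2 * Q2 u * (1 - (Q2 u + Q3 u) / τC + A1 u / τA1C + A2 u / τA2C)
          + γ3 * Q3 u * (1 - (Q2 u + Q3 u) / τC + A1 u / τA1C + A2 u / τA2C)
          + f1 (A1 u) * Q1 u ≤ Kf * (Q2 u + Q3 u) + εf
        rw [hKdef, hεdef]
        linarith [key2, key3, key1, hg2, hg3])
      t ⟨ht.1, le_refl t⟩
  obtain ⟨GB, hGBdef⟩ : ∃ g : ℝ, g = gronwallBound (Q2 0 + Q3 0) Kf εf T := ⟨_, rfl⟩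
  have hmono : ∀ t ∈ Set.Ico 0 T, gronwallBound (Q2 0 + Q3 0) Kf εf (t - 0) ≤ GB := by
    intro t ht
    rw [hGBdef]
    simp only [gronwallBound_of_K_ne_0 hKpos.ne']
    have hexp : exp (Kf * (t - 0)) ≤ exp (Kf * T) := by
      apply exp_le_exp.2
      have := mul_le_mul_of_nonneg_left ht.2.le hKpos.le
      linarith
    have hδnn : 0 ≤ Q2 0 + Q3 0 := by linarith
    have hεK : 0 ≤ εf / Kf := div_nonneg hεnn hKpos.le
    nlinarith [hexp, hδnn, hεK]
  have hGBnn : 0 ≤ GB := by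
    rw [hGBdef]
    simp only [gronwallBound_of_K_ne_0 hKpos.ne']
    have h1 : (1:ℝ) ≤ exp (Kf * T) := one_le_exp (by positivity)
    have hδnn : 0 ≤ Q2 0 + Q3 0 := by linarith
    have hεK : 0 ≤ εf / Kf := div_nonneg hεnn hKpos.le
    nlinarith
  refine ⟨GB + 1, GB + 1, by linarith, by linarith, fun t ht => ?_⟩
  have h1 := hSb t ht
  have h2 := hmono t ht
  have h3 := hQ2nn t ht
  have h4 := hQ3nn t ht
  constructor <;> linarith
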